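/- Let U_i : H → H, i = 1,…,m, be ρ_i-strongly quasi-nonexpansive operators on a real Hilbert space with ⋂_i Fix U_i ≠ ∅, and let ρ := min_i ρ_i > 0. Then the composition U := U_m ∘ ⋯ ∘ U_1 is (ρ/m)-strongly quasi-nonexpansive, and Fix U = ⋂_i Fix U_i. -/

import Mathlib

open RealInnerProductSpace

theorem composition_sqne
    {H : Type*} [NormedAddCommGroup H] [InnerProductSpace ℝ H]
    {m : ℕ} [NeZero m] (U : Fin m → H → H) (ρ : Fin m → ℝ)
    (hsqne : ∀ i x z, U i z = z →
      ‖U i x - z‖ ^ 2 ≤ ‖x - z‖ ^ 2 - ρ i * ‖U i x - x‖ ^ 2)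
    (hfix : ∃ z, ∀ i, U i z = z)
    (ρmin : ℝ) (hρmin : ρmin = Finset.univ.inf' Finset.univ_nonempty ρ)
    (hρpos : 0 < ρmin)
    (T : H → H) (hT : ∀ x, T x = (List.ofFn U).foldl (fun y f => f y) x) :
    (∀ x z, T z = z →
      ‖T x - z‖ ^ 2 ≤ ‖x - z‖ ^ 2 - (ρmin / m) * ‖T x - x‖ ^ 2) ∧
    {z | T z = z} = ⋂ i, {z | U i z = z} := by
  set P : ℕ → H → H := fun k x => ((List.ofFn U).take k).foldl (fun y f => f y) x with hP
  have hP0 : ∀ x, P 0 x = x := fun x => rfl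
  have hPsucc : ∀ (k : ℕ) (h : k < m) (x : H), P (k + 1) x = U ⟨k, h⟩ (P k x) := by
    intro k h x
    show ((List.ofFn U).take (k+1)).foldl (fun y f => f y) x = _
    rw [List.take_succ, List.foldl_append]
    have : (List.ofFn U)[k]? = some (U ⟨k, h⟩) := by
      rw [List.getElem?_eq_getElem (by simpa using h)]
      simp [List.getElem_ofFn]
    simp [this]
    rfl
  have hPm : ∀ x, T x = P m x := by
    intro x
    rw [hT x]
    show _ = List.foldl (fun y f => f y) x ((List.ofFn U).take m)
    rw [List.take_of_length_le (by simp)]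
  have hρle : ∀ i : Fin m, ρmin ≤ ρ i := by
    intro i
    rw [hρmin]
    exact Finset.inf'_le _ (Finset.mem_univ i)
  -- main chain inequality
  have key : ∀ z, (∀ i, U i z = z) → ∀ x, ∀ k ≤ m,
      ‖P k x - z‖ ^ 2 + ρmin * ∑ j ∈ Finset.range k, ‖P (j+1) x - P j x‖ ^ 2
        ≤ ‖x - z‖ ^ 2 := by
    intro z hz x k hk
    induction k with
    | zero => simp [hP0]
    | succ k ih =>
      have hkm : k < m := hk
      have ih' := ih (le_of_lt hkm)
      have h1 := hsqne ⟨k, hkm⟩ (P k x) z (hz _)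
      rw [← hPsucc k hkm x] at h1
      have h2 : ρmin * ‖P (k+1) x - P k x‖ ^ 2 ≤ ρ ⟨k, hkm⟩ * ‖P (k+1) x - P k x‖ ^ 2 :=
        mul_le_mul_of_nonneg_right (hρle _) (by positivity)
      rw [Finset.sum_range_succ]
      nlinarith [h1, h2, ih']
  -- telescoping triangle inequality
  have tel : ∀ x, ∀ k : ℕ, ‖P k x - x‖ ≤ ∑ j ∈ Finset.range k, ‖P (j+1) x - P j x‖ := by
    intro x k
    induction k with
    | zero => simp [hP0]
    | succ k ih =>
      rw [Finset.sum_range_succ]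
      calc ‖P (k+1) x - x‖ ≤ ‖P (k+1) x - P k x‖ + ‖P k x - x‖ := by
            have := norm_add_le (P (k+1) x - P k x) (P k x - x)
            simpa [sub_add_sub_cancel] using this
        _ ≤ ∑ j ∈ Finset.range k, ‖P (j+1) x - P j x‖ + ‖P (k+1) x - P k x‖ := by
            linarith
        _ = _ := by ring
  -- fixed points of T are common fixed points
  obtain ⟨z0, hz0⟩ := hfix
  have hfixedall : ∀ z, (∀ i, U i z = z) → ∀ k : ℕ, k ≤ m → P k z = z := by
    intro z hz k hk
    induction k with
    | zero => exact hP0 z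
    | succ k ih =>
      have hkm : k < m := hk
      rw [hPsucc k hkm, ih (le_of_lt hkm), hz]
  have hsubset : ∀ z, T z = z → ∀ i, U i z = z := by
    intro z hz i
    have hk := key z0 hz0 z m le_rfl
    rw [← hPm z, hz] at hk
    have hsum : ∑ j ∈ Finset.range m, ‖P (j+1) z - P j z‖ ^ 2 ≤ 0 := by
      nlinarith [hk]
    have hzero : ∀ j ∈ Finset.range m, ‖P (j+1) z - P j z‖ ^ 2 = 0 := by
      intro j hj
      have h1 : (0:ℝ) ≤ ‖P (j+1) z - P j z‖ ^ 2 := by positivity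
      have h2 := Finset.sum_le_sum (fun j (_ : j ∈ Finset.range m) =>
        (by positivity : (0:ℝ) ≤ ‖P (j+1) z - P j z‖ ^ 2))
      have := (Finset.sum_eq_zero_iff_of_nonneg (fun j _ => by positivity)).mp
        (le_antisymm hsum (by simpa using h2))
      exact this j hj
    have hstep : ∀ k : ℕ, k ≤ m → P k z = z := by
      intro k hk'
      induction k with
      | zero => exact hP0 z
      | succ k ih =>
        have hkm : k < m := hk'
        have h0 : ‖P (k+1) z - P k z‖ ^ 2 = 0 := hzero k (Finset.mem_range.mpr hkm)
        have : P (k+1) z = P k z := by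
          have h1 := (pow_eq_zero_iff (n := 2) (by norm_num)).mp h0
          have h2 := norm_eq_zero.mp h1
          exact sub_eq_zero.mp h2
        rw [this, ih (le_of_lt hkm)]
    have h1 : P (i + 1) z = z := hstep (i + 1) i.isLt
    have h2 : P (i : ℕ) z = z := hstep i (le_of_lt i.isLt)
    have := hPsucc i i.isLt z
    rw [h1, h2] at this
    simpa using this.symm
  have hseteq : {z | T z = z} = ⋂ i, {z | U i z = z} := by
    ext z
    simp only [Set.mem_setOf_eq, Set.mem_iInter]
    constructor
    · exact hsubset z
    · intro hz
      rw [hPm z, hfixedall z hz m le_rfl]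
  refine ⟨?_, hseteq⟩
  intro x z hz
  have hzfix : ∀ i, U i z = z := hsubset z hz
  have hk := key z hzfix x m le_rfl
  have htel := tel x m
  have hm : (0:ℝ) < m := by
    exact_mod_cast Nat.pos_of_ne_zero (NeZero.ne m)
  have hcs : (∑ j ∈ Finset.range m, ‖P (j+1) x - P j x‖) ^ 2
      ≤ (Finset.range m).card * ∑ j ∈ Finset.range m, ‖P (j+1) x - P j x‖ ^ 2 :=
    sq_sum_le_card_mul_sum_sq
  rw [Finset.card_range] at hcs
  have hTx : ‖T x - x‖ ^ 2 ≤ m * ∑ j ∈ Finset.range m, ‖P (j+1) x - P j x‖ ^ 2 := by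
    have h1 : ‖T x - x‖ ^ 2 ≤ (∑ j ∈ Finset.range m, ‖P (j+1) x - P j x‖) ^ 2 := by
      rw [hPm x]
      exact pow_le_pow_left₀ (norm_nonneg _) htel 2
    exact h1.trans hcs
  have hdivm : (ρmin / m) * ‖T x - x‖ ^ 2 ≤ ρmin * ∑ j ∈ Finset.range m, ‖P (j+1) x - P j x‖ ^ 2 := by
    have : (ρmin / m) * ‖T x - x‖ ^ 2 ≤ (ρmin / m) * (m * ∑ j ∈ Finset.range m, ‖P (j+1) x - P j x‖ ^ 2) :=
      mul_le_mul_of_nonneg_left hTx (by positivity)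
    calc (ρmin / m) * ‖T x - x‖ ^ 2 ≤ _ := this
      _ = ρmin * ∑ j ∈ Finset.range m, ‖P (j+1) x - P j x‖ ^ 2 := by
        field_simp
  rw [hPm x]
  rw [hPm x] at hdivm
  linarith [hk, hdivm]
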